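/- arXiv:1102.0422 — 2 statements merged into one kernel-verified Lean document; each statement's English description precedes it below -/
import Mathlib

section
/- Let Γ be the 2-cocycle Γ(s,t) = ∏_{j≠n} p^{sₙ tⱼ} on ℤⁿ with p^m = q². Let a, b ∈ ℤⁿ each be of the form content(x_{α,ij}) = ε(z_{α,j}) - ε(w_{α,i}) or content(y_α) = ∑_{ν∈M_α} ε(ν), with 1 ≤ ᾱ ≤ n-m. Then Γ(a,b) = 1, except: Γ(content(x_{α,i₁,n-m-ᾱ+1}), content(x_{α,i₂,n-m-ᾱ+1})) = p⁻¹ and Γ(content(x_{α,i,n-m-ᾱ+1}), content(y_α)) = q², for any i, i₁, i₂ ∈ {1,…,m}. -/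
/-- Values of the cocycle Γ on the generators, case 1 ≤ ᾱ ≤ n-m. -/
theorem stmt10 (𝕂 : Type*) [Field 𝕂] (p q : 𝕂) (hp : p ≠ 0) (hq : q ≠ 0)
    (m n : ℕ) (hm : 1 ≤ m) (hmn : m < n) (α : ℤ)
    (hpq : p ^ m = q ^ 2)
    (rep : ℤ → ℤ) (hrep : ∀ k, rep k = (k - 1) % n + 1)
    (hα1 : 1 ≤ rep α) (hα2 : rep α ≤ (n : ℤ) - m)
    (Mα : Finset ℤ) (hMα : Mα = (Finset.range m).image fun t : ℕ => rep (α + t))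
    (cx : ℕ → ℕ → ℤ → ℤ)
    (hcx : ∀ i j k, cx i j k =
      (if k = rep (j + α + m - 1) then 1 else 0) - (if k = rep (α + m - i) then 1 else 0))
    (cy : ℤ → ℤ) (hcy : ∀ k, cy k = if k ∈ Mα then 1 else 0)
    (Γ : (ℤ → ℤ) → (ℤ → ℤ) → 𝕂)
    (hΓ : ∀ s t, Γ s t = ∏ j ∈ Finset.Icc (1 : ℤ) ((n : ℤ) - 1), p ^ (s n * t j)) :
    (∀ i₁ i₂ j₁ j₂ : ℕ, 1 ≤ i₁ → i₁ ≤ m → 1 ≤ i₂ → i₂ ≤ m →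
      1 ≤ j₁ → j₁ ≤ n - m → 1 ≤ j₂ → j₂ ≤ n - m →
      Γ (cx i₁ j₁) (cx i₂ j₂) =
        if (j₁ : ℤ) = (n : ℤ) - m - rep α + 1 ∧ (j₂ : ℤ) = (n : ℤ) - m - rep α + 1
        then p⁻¹ else 1) ∧
    (∀ i j : ℕ, 1 ≤ i → i ≤ m → 1 ≤ j → j ≤ n - m →
      Γ (cx i j) cy = if (j : ℤ) = (n : ℤ) - m - rep α + 1 then q ^ 2 else 1) ∧
    (∀ i j : ℕ, 1 ≤ i → i ≤ m → 1 ≤ j → j ≤ n - m → Γ cy (cx i j) = 1) ∧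
    Γ cy cy = 1 := by
  have hm' : (1 : ℤ) ≤ m := by exact_mod_cast hm
  have hmn' : (m : ℤ) < n := by exact_mod_cast hmn
  have hn0 : (0 : ℤ) < n := by linarith
  set a : ℤ := rep α with ha
  -- a is determined mod n
  have hcong : ∀ d : ℤ, (α + d - 1) % n = (a + d - 1) % n := by
    intro d
    have h1 : a - 1 = (α - 1) % n := by rw [ha, hrep]; ring
    have h2 : a + d - 1 = (α - 1) % n + d := by rw [← h1]; ring
    rw [h2, Int.emod_add_emod]
    ring_nf
  -- rep (α + d), no wrap-around
  have repeq : ∀ d : ℤ, 1 ≤ a + d → a + d ≤ n → rep (α + d) = a + d := by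
    intro d h1 h2
    rw [hrep, hcong d, Int.emod_eq_of_lt (by omega) (by omega)]
    ring
  -- rep (α + d), with wrap-around
  have repeq' : ∀ d : ℤ, n + 1 ≤ a + d → a + d ≤ 2 * n → rep (α + d) = a + d - n := by
    intro d h1 h2
    have h3 : (a + d - 1) % n = (a + d - n - 1) % n := by
      rw [show a + d - n - 1 = (a + d - 1) + n * (-1) by ring, Int.add_mul_emod_self_left]
    rw [hrep, hcong d, h3, Int.emod_eq_of_lt (by omega) (by omega)]
    ring
  -- the w-index
  have hw : ∀ i : ℕ, 1 ≤ i → i ≤ m → rep (α + m - i) = a + m - i := by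
    intro i h1 h2
    have h1' : (1 : ℤ) ≤ i := by exact_mod_cast h1
    have h2' : (i : ℤ) ≤ m := by exact_mod_cast h2
    rw [show α + (m : ℤ) - i = α + ((m : ℤ) - i) by ring,
      repeq ((m : ℤ) - i) (by omega) (by omega)]
    ring
  -- the z-index
  have hz1 : ∀ j : ℕ, (j : ℤ) = (n : ℤ) - m - a + 1 → rep ((j : ℤ) + α + m - 1) = n := by
    intro j hj
    rw [show (j : ℤ) + α + m - 1 = α + ((j : ℤ) + m - 1) by ring,
      repeq ((j : ℤ) + m - 1) (by omega) (by omega)]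
    omega
  have hz2 : ∀ j : ℕ, 1 ≤ j → (j : ℤ) ≤ (n : ℤ) - m → (j : ℤ) ≠ (n : ℤ) - m - a + 1 →
      1 ≤ rep ((j : ℤ) + α + m - 1) ∧ rep ((j : ℤ) + α + m - 1) ≤ (n : ℤ) - 1 := by
    intro j h1 h2 h3
    have h1' : (1 : ℤ) ≤ j := by exact_mod_cast h1
    have e : (j : ℤ) + α + m - 1 = α + ((j : ℤ) + m - 1) := by ring
    rcases lt_or_ge ((j : ℤ) + m - 1 + a) n with h | h
    · rw [e, repeq ((j : ℤ) + m - 1) (by omega) (by omega)]; omega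
    · rw [e, repeq' ((j : ℤ) + m - 1) (by omega) (by omega)]; omega
  -- value of cx at n
  have hxn : ∀ i j : ℕ, 1 ≤ i → i ≤ m → 1 ≤ j → (j : ℤ) ≤ (n : ℤ) - m →
      cx i j n = if (j : ℤ) = (n : ℤ) - m - a + 1 then 1 else 0 := by
    intro i j hi1 hi2 hj1 hj2
    have h1' : (1 : ℤ) ≤ i := by exact_mod_cast hi1
    have h2' : (i : ℤ) ≤ m := by exact_mod_cast hi2
    have hwn : (n : ℤ) ≠ rep (α + m - i) := by rw [hw i hi1 hi2]; omega
    rw [hcx, if_neg hwn]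
    by_cases hj : (j : ℤ) = (n : ℤ) - m - a + 1
    · rw [if_pos hj, if_pos (hz1 j hj).symm]; ring
    · rw [if_neg hj, if_neg (by have := hz2 j hj1 hj2 hj; omega)]; ring
  -- sum of cx over Icc 1 (n-1)
  have hsumx : ∀ i j : ℕ, 1 ≤ i → i ≤ m → 1 ≤ j → (j : ℤ) ≤ (n : ℤ) - m →
      ∑ k ∈ Finset.Icc (1 : ℤ) ((n : ℤ) - 1), cx i j k =
        if (j : ℤ) = (n : ℤ) - m - a + 1 then -1 else 0 := by
    intro i j hi1 hi2 hj1 hj2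
    have h1' : (1 : ℤ) ≤ i := by exact_mod_cast hi1
    have h2' : (i : ℤ) ≤ m := by exact_mod_cast hi2
    simp only [hcx]
    rw [Finset.sum_sub_distrib, Finset.sum_ite_eq' _ (rep ((j : ℤ) + α + m - 1)) (fun _ => (1 : ℤ)),
      Finset.sum_ite_eq' _ (rep (α + (m : ℤ) - i)) (fun _ => (1 : ℤ))]
    have hwmem : rep (α + (m : ℤ) - i) ∈ Finset.Icc (1 : ℤ) ((n : ℤ) - 1) := by
      rw [hw i hi1 hi2, Finset.mem_Icc]; omega
    rw [if_pos hwmem]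
    by_cases hj : (j : ℤ) = (n : ℤ) - m - a + 1
    · rw [if_pos hj, if_neg (by rw [hz1 j hj, Finset.mem_Icc]; omega)]
      ring
    · rw [if_neg hj, if_pos (by rw [Finset.mem_Icc]; exact hz2 j hj1 hj2 hj)]
      ring
  -- value of cy at n
  have hyn : cy n = 0 := by
    rw [hcy, if_neg]
    rw [hMα]
    simp only [Finset.mem_image, Finset.mem_range, not_exists]
    rintro t ⟨ht, hteq⟩
    have ht' : (t : ℤ) ≤ (m : ℤ) - 1 := by omega
    rw [repeq t (by omega) (by omega)] at hteq
    omega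
  -- sum of cy
  have hsumy : ∑ k ∈ Finset.Icc (1 : ℤ) ((n : ℤ) - 1), cy k = m := by
    simp only [hcy]
    rw [Finset.sum_ite_mem, Finset.inter_eq_right.mpr, Finset.sum_const]
    · have hcard : Mα.card = m := by
        rw [hMα, Finset.card_image_of_injOn, Finset.card_range]
        intro s hs t ht hst
        simp only [Finset.mem_coe, Finset.mem_range] at hs ht
        have hs' : (s : ℤ) ≤ (m : ℤ) - 1 := by omega
        have ht' : (t : ℤ) ≤ (m : ℤ) - 1 := by omega
        simp only at hst
        rw [repeq s (by omega) (by omega), repeq t (by omega) (by omega)] at hst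
        omega
      rw [hcard]; simp
    · rw [hMα]
      intro x hx
      simp only [Finset.mem_image, Finset.mem_range] at hx
      obtain ⟨t, ht, rfl⟩ := hx
      have ht' : (t : ℤ) ≤ (m : ℤ) - 1 := by omega
      rw [repeq t (by omega) (by omega), Finset.mem_Icc]
      omega
  -- product formula
  have prodpow : ∀ (F : Finset ℤ) (f : ℤ → ℤ), (∏ j ∈ F, p ^ f j) = p ^ (∑ j ∈ F, f j) := by
    intro F f
    classical
    induction F using Finset.induction_on with
    | empty => simp
    | insert x s h ih =>
      rw [Finset.prod_insert h, Finset.sum_insert h, ih, ← zpow_add₀ hp]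
  have hΓ' : ∀ s t, Γ s t = p ^ (s n * ∑ j ∈ Finset.Icc (1 : ℤ) ((n : ℤ) - 1), t j) := by
    intro s t
    rw [hΓ, prodpow, Finset.mul_sum]
  -- casts of the ℕ bounds
  have castb : ∀ j : ℕ, j ≤ n - m → (j : ℤ) ≤ (n : ℤ) - m := by intro j hj; omega
  refine ⟨?_, ?_, ?_, ?_⟩
  · intro i₁ i₂ j₁ j₂ hi₁ hi₁' hi₂ hi₂' hj₁ hj₁' hj₂ hj₂'
    rw [hΓ', hxn i₁ j₁ hi₁ hi₁' hj₁ (castb _ hj₁'), hsumx i₂ j₂ hi₂ hi₂' hj₂ (castb _ hj₂')]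
    by_cases h1 : (j₁ : ℤ) = (n : ℤ) - m - a + 1 <;>
      by_cases h2 : (j₂ : ℤ) = (n : ℤ) - m - a + 1 <;>
      simp [h1, h2, zpow_neg]
  · intro i j hi hi' hj hj'
    rw [hΓ', hxn i j hi hi' hj (castb _ hj'), hsumy]
    by_cases h1 : (j : ℤ) = (n : ℤ) - m - a + 1 <;> simp [h1, ← hpq, zpow_natCast]
  · intro i j hi hi' hj hj'
    rw [hΓ', hyn]
    simp
  · rw [hΓ', hyn]
    simp
end

section
/- Let K = {k₁ < ⋯ < k_t} ⊆ {1,…,m} and L = {l₁ < ⋯ < l_t} ⊆ {1,…,n-m}, and suppose n-m+1 ≤ ᾱ ≤ n. Let v = ∑_{ν=1}^{t} ( ε((l_ν+α+m-1)~) - ε((α+m-k_ν)~) ) ∈ ℤⁿ and u = ∑_{ν∈M_α} ε(ν). Then Γ(v, u) = p·q⁻² if ᾱ-(n-m) ∈ K, and Γ(v, u) = 1 otherwise, where Γ(s,t) = ∏_{j≠n} p^{sₙ tⱼ} and p^m = q². -/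
/-- Γ on general quantum minor contents, case n-m+1 ≤ ᾱ ≤ n. -/
theorem stmt13 (𝕂 : Type*) [Field 𝕂] (p q : 𝕂) (hp : p ≠ 0) (hq : q ≠ 0)
    (m n : ℕ) (hm : 1 ≤ m) (hmn : m < n) (α : ℤ)
    (hpq : p ^ m = q ^ 2)
    (rep : ℤ → ℤ) (hrep : ∀ k, rep k = (k - 1) % n + 1)
    (hα1 : (n : ℤ) - m + 1 ≤ rep α) (hα2 : rep α ≤ n)
    (Mα : Finset ℤ) (hMα : Mα = (Finset.range m).image fun t : ℕ => rep (α + t))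
    (K L : Finset ℤ) (hK : K ⊆ Finset.Icc 1 (m : ℤ))
    (hL : L ⊆ Finset.Icc 1 ((n : ℤ) - m)) (hKL : K.card = L.card)
    (v : ℤ → ℤ)
    (hv : ∀ x, v x = (∑ l ∈ L, if x = rep (l + α + m - 1) then 1 else 0)
        - ∑ k ∈ K, if x = rep (α + m - k) then 1 else 0)
    (u : ℤ → ℤ) (hu : ∀ x, u x = if x ∈ Mα then 1 else 0)
    (Γ : (ℤ → ℤ) → (ℤ → ℤ) → 𝕂)
    (hΓ : ∀ s t, Γ s t = ∏ j ∈ Finset.Icc (1 : ℤ) ((n : ℤ) - 1), p ^ (s n * t j)) :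
    Γ v u = if (rep α - ((n : ℤ) - m)) ∈ K then p * q ^ (-2 : ℤ) else 1 := by
  have hn0 : 0 < (n : ℤ) := by exact_mod_cast Nat.lt_of_lt_of_le (Nat.lt_of_lt_of_le Nat.zero_lt_one hm) hmn.le
  -- basic facts about rep
  have hrep_lb : ∀ k, 1 ≤ rep k := by
    intro k; rw [hrep]
    have := Int.emod_nonneg (k - 1) hn0.ne'
    omega
  have hrep_ub : ∀ k, rep k ≤ n := by
    intro k; rw [hrep]
    have := Int.emod_lt_of_pos (k - 1) hn0
    omega
  have hrep_congr : ∀ a b : ℤ, a % n = b % n → rep a = rep b := by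
    intro a b h
    rw [hrep, hrep]
    have : a - 1 ≡ b - 1 [ZMOD (n : ℤ)] := Int.ModEq.sub_right 1 h
    rw [this]
  have hrep_mod : ∀ a : ℤ, rep a % n = a % n := by
    intro a
    rw [hrep]
    have h1 : ((a - 1) % n + 1) % n = ((a - 1) + 1) % n :=
      Int.ModEq.add_right 1 (Int.emod_emod_of_dvd (a - 1) dvd_rfl)
    rw [h1]; ring_nf
  have hrep_id : ∀ k : ℤ, 1 ≤ k → k ≤ n → rep k = k := by
    intro k h1 h2
    rw [hrep, Int.emod_eq_of_lt (by omega) (by omega)]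
    ring
  have hrep_id2 : ∀ k : ℤ, (n : ℤ) + 1 ≤ k → k ≤ 2 * n → rep k = k - n := by
    intro k h1 h2
    have : rep k = rep (k - n) := hrep_congr _ _ (Int.sub_emod_right k n).symm
    rw [this, hrep_id (k - n) (by omega) (by omega)]
  have hrep_shift : ∀ t : ℤ, rep (α + t) = rep (rep α + t) := by
    intro t
    refine hrep_congr _ _ ?_
    have h1 : (α + t) % n = (α % n + t % n) % n := Int.add_emod _ _ _
    have h2 : (rep α + t) % n = (rep α % n + t % n) % n := Int.add_emod _ _ _
    rw [h1, h2, hrep_mod]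
  -- product to power of sum
  have hprod : ∀ (s : Finset ℤ) (f : ℤ → ℤ), ∏ j ∈ s, p ^ (f j) = p ^ (∑ j ∈ s, f j) := by
    intro s f
    induction s using Finset.induction with
    | empty => simp
    | insert a s h ih =>
                     rw [Finset.prod_insert h, Finset.sum_insert h, zpow_add₀ hp, ih]
  -- value of v n
  set c : ℤ := rep α - ((n : ℤ) - m) with hc
  have hvn : v n = -(if c ∈ K then 1 else 0) := by
    rw [hv]
    have hLsum : (∑ l ∈ L, if (n : ℤ) = rep (l + α + m - 1) then (1:ℤ) else 0) = 0 := by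
      apply Finset.sum_eq_zero
      intro l hl
      have hl' := hL hl
      rw [Finset.mem_Icc] at hl'
      have : rep (l + α + m - 1) = rep (rep α + (l + m - 1)) := by
        rw [show l + α + m - 1 = α + (l + m - 1) by ring, hrep_shift]
      rw [this, hrep_id2 (rep α + (l + (m:ℤ) - 1)) (by omega) (by omega)]
      have : ¬ ((n : ℤ) = rep α + (l + m - 1) - n) := by omega
      simp [this]
    rw [hLsum]
    have hKsum : (∑ k ∈ K, if (n : ℤ) = rep (α + m - k) then (1:ℤ) else 0)
        = ∑ k ∈ K, if k = c then (1:ℤ) else 0 := by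
      apply Finset.sum_congr rfl
      intro k hk
      have hk' := hK hk
      rw [Finset.mem_Icc] at hk'
      have hre : rep (α + m - k) = rep (rep α + (m - k)) := by
        rw [show α + (m:ℤ) - k = α + ((m:ℤ) - k) by ring, hrep_shift]
      by_cases hle : rep α + ((m:ℤ) - k) ≤ n
      · rw [hre, hrep_id (rep α + ((m:ℤ) - k)) (by omega) (by omega)]
        by_cases hkc : k = c
        · simp [hkc, hc]; omega
        · have : ¬ ((n:ℤ) = rep α + ((m:ℤ) - k)) := by omega
          simp [this, hkc]
      · rw [hre, hrep_id2 (rep α + ((m:ℤ) - k)) (by omega) (by omega)]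
        have h1 : ¬ ((n:ℤ) = rep α + ((m:ℤ) - k) - n) := by omega
        have h2 : ¬ (k = c) := by omega
        simp [h1, h2]
    rw [hKsum, Finset.sum_ite_eq' K c (fun _ => (1:ℤ))]
    simp
  -- Mα facts
  have hMsub : Mα ⊆ Finset.Icc 1 (n : ℤ) := by
    rw [hMα]
    intro x hx
    rw [Finset.mem_image] at hx
    obtain ⟨t, _, rfl⟩ := hx
    rw [Finset.mem_Icc]
    exact ⟨hrep_lb _, hrep_ub _⟩
  have hMcard : Mα.card = m := by
    rw [hMα, Finset.card_image_of_injOn, Finset.card_range]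
    intro t₁ ht₁ t₂ ht₂ h
    rw [Finset.mem_coe, Finset.mem_range] at ht₁ ht₂
    have h' : rep (α + (t₁:ℤ)) = rep (α + (t₂:ℤ)) := h
    have h1 : (α + t₁) % n = (α + t₂) % n := by
      rw [← hrep_mod (α + (t₁:ℤ)), ← hrep_mod (α + (t₂:ℤ)), h']
    have h2 : (n : ℤ) ∣ ((α + t₂) - (α + t₁)) := Int.ModEq.dvd h1
    have h3 : ((t₂ : ℤ) - t₁) = 0 := by
      apply Int.eq_zero_of_abs_lt_dvd (by simpa using h2)
      rw [abs_lt]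
      omega
    omega
  have hnM : (n : ℤ) ∈ Mα := by
    rw [hMα, Finset.mem_image]
    refine ⟨((n : ℤ) - rep α).toNat, ?_, ?_⟩
    · rw [Finset.mem_range]; omega
    · have ht : (((n : ℤ) - rep α).toNat : ℤ) = (n : ℤ) - rep α := Int.toNat_of_nonneg (by omega)
      show rep (α + (((n : ℤ) - rep α).toNat : ℤ)) = (n : ℤ)
      rw [hrep_shift, ht, show rep α + ((n:ℤ) - rep α) = n by ring,
        hrep_id (n:ℤ) (by omega) le_rfl]
  -- sum of u over Icc 1 (n-1)
  have husum : (∑ j ∈ Finset.Icc (1:ℤ) ((n:ℤ) - 1), u j) = (m : ℤ) - 1 := by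
    have hIcc : Finset.Icc (1:ℤ) ((n:ℤ) - 1) = (Finset.Icc (1:ℤ) (n:ℤ)).erase n := by
      ext x
      rw [Finset.mem_erase, Finset.mem_Icc, Finset.mem_Icc]
      omega
    have hfull : (∑ j ∈ Finset.Icc (1:ℤ) (n:ℤ), u j) = (m : ℤ) := by
      have : (∑ j ∈ Finset.Icc (1:ℤ) (n:ℤ), u j)
          = ∑ j ∈ Finset.Icc (1:ℤ) (n:ℤ) ∩ Mα, (1:ℤ) := by
        rw [← Finset.sum_ite_mem]
        exact Finset.sum_congr rfl fun j _ => hu j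
      rw [this, Finset.inter_eq_right.mpr hMsub, Finset.sum_const, hMcard]
      simp
    have hsplit := Finset.add_sum_erase _ u hnM
    have h1 : (∑ j ∈ (Finset.Icc (1:ℤ) (n:ℤ)).erase n, u j)
        = (∑ j ∈ Finset.Icc (1:ℤ) (n:ℤ), u j) - u n := by
      have := Finset.add_sum_erase (Finset.Icc (1:ℤ) (n:ℤ)) u
        (a := (n:ℤ)) (by rw [Finset.mem_Icc]; omega)
      omega
    rw [hIcc, h1, hfull, hu, if_pos hnM]
  -- final computation
  rw [hΓ, hprod, ← Finset.mul_sum, husum, hvn]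
  by_cases hcK : c ∈ K
  · simp only [if_pos hcK]
    rw [show (-(1:ℤ)) * ((m:ℤ)-1) = 1 + -(m:ℤ) by ring,
      zpow_add₀ hp, zpow_one, zpow_neg, zpow_natCast, hpq]
    congr 1
    rw [← zpow_natCast q 2, ← zpow_neg]
    norm_num
  · simp only [if_neg hcK]
    rw [show (-(0:ℤ)) * ((m:ℤ)-1) = 0 by ring, zpow_zero]
end
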